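/- Let N ≥ 1 be an integer and s ∈ (0,1) with N > 2s. Then there exists a constant C > 0, depending only on N and s, such that for every y ∈ ℝ^N with |y| ≥ 2, ∫_{ℝ^N} (1+|y−z|)^{−(N−2s)} (1+|z|)^{−N} dz ≤ C (ln|y|) (1+|y|)^{−(N−2s)}. -/

import Mathlib

set_option maxHeartbeats 2000000
open MeasureTheory Metric Set

section AuxStmt10

private lemma polar_aux10 (N : ℕ) (hN : 1 ≤ N) (g : ℝ → ℝ) :
    ∫ z : EuclideanSpace ℝ (Fin N), g ‖z‖ =
      (N : ℝ) * (volume (ball (0 : EuclideanSpace ℝ (Fin N)) 1)).toReal *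
        ∫ r in Ioi (0:ℝ), r ^ (N - 1) * g r := by
  haveI : Nontrivial (EuclideanSpace ℝ (Fin N)) := by
    refine ⟨EuclideanSpace.single ⟨0, hN⟩ 1, 0, ?_⟩
    intro h
    have := congrArg (fun v => ‖v‖) h
    simp [EuclideanSpace.norm_single] at this
  rw [MeasureTheory.integral_fun_norm_addHaar (volume : Measure (EuclideanSpace ℝ (Fin N))) g,
    finrank_euclideanSpace_fin, nsmul_eq_mul, smul_eq_mul, mul_assoc]
  simp [smul_eq_mul]
  exact Or.inl (Or.inl rfl)

private lemma oneD_ball10 (N : ℕ) (hN : 1 ≤ N) (b : ℝ) (c : ℝ) (hc : 0 ≤ c) :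
    ∫ r in Ioi (0:ℝ), r ^ (N - 1) * (if r ≤ c then (1 + r) ^ (-b) else 0) ≤
      ∫ x in (1:ℝ)..(1+c), x ^ ((N:ℝ) - 1 - b) := by
  set e : ℝ := (N:ℝ) - 1 - b with he
  have hGcont : ContinuousOn (fun r : ℝ => (1 + r) ^ e) (Icc 0 c) := by
    apply ContinuousOn.rpow_const (by fun_prop)
    intro x hx
    exact Or.inl (by nlinarith [hx.1])
  have hGint : IntegrableOn (fun r : ℝ => (1 + r) ^ e) (Ioc 0 c) :=
    (hGcont.integrableOn_Icc).mono_set Ioc_subset_Icc_self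
  have hGind : Integrable ((Ioc (0:ℝ) c).indicator (fun r => (1 + r) ^ e)) :=
    hGint.integrable_indicator measurableSet_Ioc
  have hpw : ∀ r ∈ Ioi (0:ℝ), r ^ (N - 1) * (if r ≤ c then (1 + r) ^ (-b) else 0) ≤
      (Ioc (0:ℝ) c).indicator (fun r => (1 + r) ^ e) r := by
    intro r hr
    rw [mem_Ioi] at hr
    by_cases h : r ≤ c
    · rw [if_pos h, indicator_of_mem (mem_Ioc.2 ⟨hr, h⟩)]
      have h1 : (0:ℝ) < 1 + r := by linarith
      calc r ^ (N - 1) * (1 + r) ^ (-b)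
          ≤ (1 + r) ^ (N - 1) * (1 + r) ^ (-b) := by
            apply mul_le_mul_of_nonneg_right _ (Real.rpow_nonneg h1.le _)
            exact pow_le_pow_left₀ hr.le (by linarith) _
        _ = (1 + r) ^ e := by
            rw [← Real.rpow_natCast (1 + r) (N - 1), ← Real.rpow_add h1]
            congr 1
            rw [Nat.cast_sub hN]; push_cast; ring
    · rw [if_neg h, indicator_of_notMem (by simp [mem_Ioc, h]), mul_zero]
  have hFmeas : Measurable (fun r : ℝ => r ^ (N - 1) * (if r ≤ c then (1 + r) ^ (-b) else 0)) := by
    apply Measurable.mul (by fun_prop)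
    exact Measurable.ite measurableSet_Iic (by fun_prop) measurable_const
  have hFint : IntegrableOn (fun r : ℝ => r ^ (N - 1) * (if r ≤ c then (1 + r) ^ (-b) else 0))
      (Ioi (0:ℝ)) := by
    apply Integrable.mono' hGind.integrableOn hFmeas.aestronglyMeasurable
    filter_upwards [ae_restrict_mem measurableSet_Ioi] with r hr
    rw [Real.norm_eq_abs, abs_of_nonneg]
    · exact hpw r hr
    · rw [mem_Ioi] at hr
      positivity
  calc ∫ r in Ioi (0:ℝ), r ^ (N - 1) * (if r ≤ c then (1 + r) ^ (-b) else 0)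
      ≤ ∫ r in Ioi (0:ℝ), (Ioc (0:ℝ) c).indicator (fun r => (1 + r) ^ e) r :=
        setIntegral_mono_on hFint hGind.integrableOn measurableSet_Ioi hpw
    _ = ∫ r in Ioc (0:ℝ) c, (1 + r) ^ e := by
        rw [setIntegral_indicator measurableSet_Ioc]
        congr 1
        rw [inter_eq_right.2 Ioc_subset_Ioi_self]
    _ = ∫ r in (0:ℝ)..c, (1 + r) ^ e := (intervalIntegral.integral_of_le hc).symm
    _ = ∫ x in (1:ℝ)..(1+c), x ^ e := by
        simpa using intervalIntegral.integral_comp_add_left (a := 0) (b := c)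
          (fun x => x ^ e) 1

private lemma oneD_compl10 (N : ℕ) (hN : 1 ≤ N) (b : ℝ) (hb : (N:ℝ) < b) (c : ℝ) (hc : 0 < c) :
    ∫ r in Ioi (0:ℝ), r ^ (N - 1) * (if c < r then (1 + r) ^ (-b) else 0) ≤
      c ^ ((N:ℝ) - b) / (b - N) := by
  set e : ℝ := (N:ℝ) - 1 - b with he
  have he1 : e < -1 := by rw [he]; linarith
  have hGint : IntegrableOn (fun r : ℝ => r ^ e) (Ioi c) :=
    integrableOn_Ioi_rpow_of_lt he1 hc
  have hGind : Integrable ((Ioi c).indicator (fun r : ℝ => r ^ e)) :=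
    hGint.integrable_indicator measurableSet_Ioi
  have hpw : ∀ r ∈ Ioi (0:ℝ), r ^ (N - 1) * (if c < r then (1 + r) ^ (-b) else 0) ≤
      (Ioi c).indicator (fun r : ℝ => r ^ e) r := by
    intro r hr
    rw [mem_Ioi] at hr
    by_cases h : c < r
    · rw [if_pos h, indicator_of_mem (mem_Ioi.2 h)]
      calc r ^ (N - 1) * (1 + r) ^ (-b)
          ≤ r ^ (N - 1) * r ^ (-b) := by
            apply mul_le_mul_of_nonneg_left _ (by positivity)
            exact Real.rpow_le_rpow_of_nonpos hr (by linarith) (by linarith)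
        _ = r ^ e := by
            rw [← Real.rpow_natCast r (N - 1), ← Real.rpow_add hr]
            congr 1
            rw [Nat.cast_sub hN]; push_cast; ring
    · rw [if_neg h, indicator_of_notMem (by simpa using h), mul_zero]
  have hFmeas : Measurable (fun r : ℝ => r ^ (N - 1) * (if c < r then (1 + r) ^ (-b) else 0)) := by
    apply Measurable.mul (by fun_prop)
    exact Measurable.ite measurableSet_Ioi (by fun_prop) measurable_const
  have hFint : IntegrableOn (fun r : ℝ => r ^ (N - 1) * (if c < r then (1 + r) ^ (-b) else 0))
      (Ioi (0:ℝ)) := by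
    apply Integrable.mono' hGind.integrableOn hFmeas.aestronglyMeasurable
    filter_upwards [ae_restrict_mem measurableSet_Ioi] with r hr
    rw [Real.norm_eq_abs, abs_of_nonneg]
    · exact hpw r hr
    · rw [mem_Ioi] at hr
      positivity
  calc ∫ r in Ioi (0:ℝ), r ^ (N - 1) * (if c < r then (1 + r) ^ (-b) else 0)
      ≤ ∫ r in Ioi (0:ℝ), (Ioi c).indicator (fun r : ℝ => r ^ e) r :=
        setIntegral_mono_on hFint hGind.integrableOn measurableSet_Ioi hpw
    _ = ∫ r in Ioi c, r ^ e := by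
        rw [setIntegral_indicator measurableSet_Ioi]
        congr 1
        rw [inter_eq_right.2 (Ioi_subset_Ioi hc.le)]
    _ = -c ^ (e + 1) / (e + 1) := integral_Ioi_rpow_of_lt he1 hc
    _ = c ^ ((N:ℝ) - b) / (b - N) := by
        rw [he, show (N:ℝ) - 1 - b + 1 = (N:ℝ) - b by ring]
        rw [div_eq_div_iff (by linarith) (by linarith)]
        ring

private lemma ball_E10 (N : ℕ) (hN : 1 ≤ N) (b : ℝ) (c : ℝ) (hc : 0 ≤ c) :
    ∫ z in closedBall (0 : EuclideanSpace ℝ (Fin N)) c, (1 + ‖z‖) ^ (-b) ≤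
      (N : ℝ) * (volume (ball (0 : EuclideanSpace ℝ (Fin N)) 1)).toReal *
        ∫ x in (1:ℝ)..(1+c), x ^ ((N:ℝ) - 1 - b) := by
  have hset : (∫ z in closedBall (0 : EuclideanSpace ℝ (Fin N)) c, (1 + ‖z‖) ^ (-b)) =
      ∫ z : EuclideanSpace ℝ (Fin N), (if ‖z‖ ≤ c then (1 + ‖z‖) ^ (-b) else 0) := by
    rw [← integral_indicator measurableSet_closedBall]
    congr 1
    funext z
    by_cases h : ‖z‖ ≤ c
    · rw [indicator_of_mem (by simpa [mem_closedBall_zero_iff] using h), if_pos h]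
    · rw [indicator_of_notMem (by simpa [mem_closedBall_zero_iff] using h), if_neg h]
  rw [hset, polar_aux10 N hN (fun r => if r ≤ c then (1 + r) ^ (-b) else 0)]
  exact mul_le_mul_of_nonneg_left (oneD_ball10 N hN b c hc) (by positivity)

private lemma compl_E10 (N : ℕ) (hN : 1 ≤ N) (b : ℝ) (hb : (N:ℝ) < b) (c : ℝ) (hc : 0 < c) :
    ∫ z in (closedBall (0 : EuclideanSpace ℝ (Fin N)) c)ᶜ, (1 + ‖z‖) ^ (-b) ≤
      (N : ℝ) * (volume (ball (0 : EuclideanSpace ℝ (Fin N)) 1)).toReal *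
        (c ^ ((N:ℝ) - b) / (b - N)) := by
  have hset : (∫ z in (closedBall (0 : EuclideanSpace ℝ (Fin N)) c)ᶜ, (1 + ‖z‖) ^ (-b)) =
      ∫ z : EuclideanSpace ℝ (Fin N), (if c < ‖z‖ then (1 + ‖z‖) ^ (-b) else 0) := by
    rw [← integral_indicator measurableSet_closedBall.compl]
    congr 1
    funext z
    by_cases h : c < ‖z‖
    · rw [indicator_of_mem (by simpa [mem_closedBall_zero_iff] using h), if_pos h]
    · rw [indicator_of_notMem (by simpa [mem_closedBall_zero_iff] using h), if_neg h]
  rw [hset, polar_aux10 N hN (fun r => if c < r then (1 + r) ^ (-b) else 0)]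
  exact mul_le_mul_of_nonneg_left (oneD_compl10 N hN b hb c hc) (by positivity)

end AuxStmt10

/-- For `N ≥ 1` and `s ∈ (0,1)` with `N > 2s`, there is `C > 0` such
that for every `y ∈ ℝ^N` with `|y| ≥ 2`,
`∫_{ℝ^N} (1+|y−z|)^{−(N−2s)} (1+|z|)^{−N} dz ≤ C (ln|y|) (1+|y|)^{−(N−2s)}`. -/
theorem stmt_10 (N : ℕ) (hN : 1 ≤ N) (s : ℝ) (hs : s ∈ Set.Ioo (0 : ℝ) 1)
    (hNs : 2 * s < N) :
    ∃ C > 0, ∀ y : EuclideanSpace ℝ (Fin N), 2 ≤ ‖y‖ →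
      (∫ z : EuclideanSpace ℝ (Fin N),
          (1 + ‖y - z‖) ^ (-((N : ℝ) - 2 * s)) * (1 + ‖z‖) ^ (-(N : ℝ))) ≤
        C * Real.log ‖y‖ * (1 + ‖y‖) ^ (-((N : ℝ) - 2 * s)) := by
  obtain ⟨hs0, hs1⟩ := hs
  set a : ℝ := (N : ℝ) - 2 * s with ha_def
  have ha : 0 < a := by rw [ha_def]; linarith
  have haN : a < N := by rw [ha_def]; linarith
  set K : ℝ := (N : ℝ) * (volume (ball (0 : EuclideanSpace ℝ (Fin N)) 1)).toReal with hK_def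
  have hK : 0 ≤ K := by positivity
  have hlog2 : 0 < Real.log 2 := Real.log_pos (by norm_num)
  set c₁ : ℝ := 2 ^ a * K * 2 with hc₁_def
  set c₂ : ℝ := 2 ^ (N:ℝ) * K * (3 ^ (2*s) / (2*s)) with hc₂_def
  set c₃ : ℝ := 2 ^ a * K / a with hc₃_def
  have hc₁ : 0 ≤ c₁ := by positivity
  have hc₂ : 0 ≤ c₂ := by positivity
  have hc₃ : 0 ≤ c₃ := by positivity
  refine ⟨c₁ + c₂ / Real.log 2 + c₃ / Real.log 2 + 1, by positivity, ?_⟩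
  intro y hy
  set R : ℝ := ‖y‖ with hR_def
  have hR2 : (2:ℝ) ≤ R := hy
  have hR0 : (0:ℝ) < R := by linarith
  have h1R : (0:ℝ) < 1 + R := by linarith
  have hlogR : 0 < Real.log R := Real.log_pos (by linarith)
  have hlogR2 : Real.log 2 ≤ Real.log R := Real.log_le_log (by norm_num) hR2
  have hpowR : 0 < (1 + R) ^ (-a) := Real.rpow_pos_of_pos h1R _
  set f : EuclideanSpace ℝ (Fin N) → ℝ :=
    fun z => (1 + ‖y - z‖) ^ (-a) * (1 + ‖z‖) ^ (-(N:ℝ)) with hf_def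
  have hf_nonneg : ∀ z, 0 ≤ f z := fun z => by
    rw [hf_def]; positivity
  have hf_cont : Continuous f := by
    rw [hf_def]
    apply Continuous.mul
    · apply Continuous.rpow_const (by fun_prop)
      intro z; left; positivity
    · apply Continuous.rpow_const (by fun_prop)
      intro z; left; positivity
  have hNa_int : Integrable (fun z : EuclideanSpace ℝ (Fin N) => (1 + ‖z‖) ^ (-((N:ℝ) + a))) := by
    apply integrable_one_add_norm
    rw [finrank_euclideanSpace_fin]; linarith
  -- global pointwise bound, for integrability
  have hglobal : ∀ z : EuclideanSpace ℝ (Fin N),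
      f z ≤ (1 + R) ^ a * (1 + ‖z‖) ^ (-((N:ℝ) + a)) := by
    intro z
    have hz0 : (0:ℝ) < 1 + ‖z‖ := by positivity
    have hyz0 : (0:ℝ) < 1 + ‖y - z‖ := by positivity
    have htri : ‖z‖ ≤ ‖y‖ + ‖y - z‖ := by
      have h := norm_sub_le y (y - z)
      simpa using h
    have hbase : 1 + ‖z‖ ≤ (1 + R) * (1 + ‖y - z‖) := by
      have hn : 0 ≤ ‖y - z‖ := norm_nonneg _
      nlinarith
    have h1 : ((1 + R) * (1 + ‖y - z‖)) ^ (-a) ≤ (1 + ‖z‖) ^ (-a) :=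
      Real.rpow_le_rpow_of_nonpos hz0 hbase (by linarith)
    have h2 : ((1 + R) * (1 + ‖y - z‖)) ^ (-a) = (1 + R) ^ (-a) * (1 + ‖y - z‖) ^ (-a) :=
      Real.mul_rpow h1R.le hyz0.le
    have h3 : (1 + ‖y - z‖) ^ (-a) ≤ (1 + R) ^ a * (1 + ‖z‖) ^ (-a) := by
      have h4 := mul_le_mul_of_nonneg_left h1 (Real.rpow_nonneg h1R.le a)
      rw [h2, ← mul_assoc, ← Real.rpow_add h1R] at h4
      simpa using h4
    calc f z = (1 + ‖y - z‖) ^ (-a) * (1 + ‖z‖) ^ (-(N:ℝ)) := by rw [hf_def]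
      _ ≤ ((1 + R) ^ a * (1 + ‖z‖) ^ (-a)) * (1 + ‖z‖) ^ (-(N:ℝ)) :=
          mul_le_mul_of_nonneg_right h3 (Real.rpow_nonneg hz0.le _)
      _ = (1 + R) ^ a * (1 + ‖z‖) ^ (-((N:ℝ) + a)) := by
          rw [mul_assoc, ← Real.rpow_add hz0]
          ring_nf
  have hf_int : Integrable f := by
    apply Integrable.mono' (hNa_int.const_mul ((1 + R) ^ a)) hf_cont.aestronglyMeasurable
    filter_upwards with z
    rw [Real.norm_eq_abs, abs_of_nonneg (hf_nonneg z)]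
    exact hglobal z
  -- decomposition
  set A : Set (EuclideanSpace ℝ (Fin N)) := closedBall 0 (R/2) with hA_def
  set B : Set (EuclideanSpace ℝ (Fin N)) := closedBall 0 (2*R) with hB_def
  have hAB : A ⊆ B := closedBall_subset_closedBall (by linarith)
  have hsplit : (∫ z, f z) =
      (∫ z in A, f z) + (∫ z in B \ A, f z) + (∫ z in Bᶜ, f z) := by
    rw [← integral_add_compl (measurableSet_closedBall : MeasurableSet B) hf_int]
    congr 1
    rw [← integral_inter_add_diff (measurableSet_closedBall : MeasurableSet A)
      hf_int.integrableOn, inter_eq_right.2 hAB]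
  -- region A
  have hT1 : (∫ z in A, f z) ≤ c₁ * Real.log R * (1 + R) ^ (-a) := by
    have hpt : ∀ z ∈ A, f z ≤ (2 ^ a * (1 + R) ^ (-a)) * (1 + ‖z‖) ^ (-(N:ℝ)) := by
      intro z hz
      rw [hA_def, mem_closedBall_zero_iff] at hz
      have h1 : R / 2 ≤ ‖y - z‖ := by
        have := norm_sub_norm_le y z
        linarith
      have h2 : (1 + ‖y - z‖) ^ (-a) ≤ 2 ^ a * (1 + R) ^ (-a) := by
        have hb : (1 + R) / 2 ≤ 1 + ‖y - z‖ := by linarith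
        calc (1 + ‖y - z‖) ^ (-a) ≤ ((1 + R) / 2) ^ (-a) :=
              Real.rpow_le_rpow_of_nonpos (by linarith) hb (by linarith)
          _ = 2 ^ a * (1 + R) ^ (-a) := by
              rw [Real.div_rpow h1R.le (by norm_num : (0:ℝ) ≤ 2), Real.rpow_neg h1R.le,
                Real.rpow_neg (by norm_num : (0:ℝ) ≤ 2), div_eq_mul_inv, inv_inv]
              ring
      calc f z = (1 + ‖y - z‖) ^ (-a) * (1 + ‖z‖) ^ (-(N:ℝ)) := by rw [hf_def]
        _ ≤ (2 ^ a * (1 + R) ^ (-a)) * (1 + ‖z‖) ^ (-(N:ℝ)) :=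
            mul_le_mul_of_nonneg_right h2 (Real.rpow_nonneg (by positivity) _)
    have hdom_int : IntegrableOn
        (fun z : EuclideanSpace ℝ (Fin N) => (2 ^ a * (1 + R) ^ (-a)) * (1 + ‖z‖) ^ (-(N:ℝ))) A := by
      apply ContinuousOn.integrableOn_compact (isCompact_closedBall _ _)
      apply Continuous.continuousOn
      apply Continuous.mul continuous_const
      apply Continuous.rpow_const (by fun_prop)
      intro z; left; positivity
    have hball : (∫ z in A, (1 + ‖z‖) ^ (-(N:ℝ))) ≤ K * Real.log (1 + R) := by
      have h := ball_E10 N hN (N:ℝ) (R/2) (by linarith)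
      have heval : (∫ x in (1:ℝ)..(1 + R/2), x ^ ((N:ℝ) - 1 - N)) = Real.log (1 + R/2) := by
        rw [show (N:ℝ) - 1 - N = -1 by ring]
        simp only [Real.rpow_neg_one]
        rw [integral_inv (Set.notMem_uIcc_of_lt zero_lt_one (by linarith))]
        simp
      rw [heval] at h
      refine h.trans ?_
      apply mul_le_mul_of_nonneg_left _ hK
      exact Real.log_le_log (by linarith) (by linarith)
    have hlog1R : Real.log (1 + R) ≤ 2 * Real.log R := by
      have h2' : (1 + R) ≤ R ^ 2 := by nlinarith
      calc Real.log (1 + R) ≤ Real.log (R ^ 2) := Real.log_le_log (by linarith) h2'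
        _ = 2 * Real.log R := by rw [Real.log_pow]; norm_num
    calc (∫ z in A, f z)
        ≤ ∫ z in A, (2 ^ a * (1 + R) ^ (-a)) * (1 + ‖z‖) ^ (-(N:ℝ)) :=
          setIntegral_mono_on hf_int.integrableOn hdom_int
            (measurableSet_closedBall : MeasurableSet A) hpt
      _ = (2 ^ a * (1 + R) ^ (-a)) * ∫ z in A, (1 + ‖z‖) ^ (-(N:ℝ)) := integral_const_mul _ _
      _ ≤ (2 ^ a * (1 + R) ^ (-a)) * (K * Real.log (1 + R)) := by
          apply mul_le_mul_of_nonneg_left hball (by positivity)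
      _ ≤ c₁ * Real.log R * (1 + R) ^ (-a) := by
          rw [hc₁_def]
          have h2a : (0:ℝ) ≤ 2 ^ a := by positivity
          nlinarith [mul_le_mul_of_nonneg_left hlog1R (mul_nonneg (mul_nonneg h2a hpowR.le) hK),
            hlogR.le]
  -- region B \ A
  have hT2 : (∫ z in B \ A, f z) ≤ c₂ * (1 + R) ^ (-a) := by
    set h : EuclideanSpace ℝ (Fin N) → ℝ :=
      (closedBall (0 : EuclideanSpace ℝ (Fin N)) (3*R)).indicator
        (fun u => (1 + ‖u‖) ^ (-a)) with hh_def
    have hint3 : IntegrableOn (fun u : EuclideanSpace ℝ (Fin N) => (1 + ‖u‖) ^ (-a))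
        (closedBall 0 (3*R)) := by
      apply ContinuousOn.integrableOn_compact (isCompact_closedBall _ _)
      apply Continuous.continuousOn
      apply Continuous.rpow_const (by fun_prop)
      intro z; left; positivity
    have hhint : Integrable h := hint3.integrable_indicator measurableSet_closedBall
    have hh_nonneg : ∀ u, 0 ≤ h u := fun u => by
      rw [hh_def]
      apply indicator_nonneg
      intro x _; positivity
    have hcomp_int : Integrable (fun z => h (z - y)) := hhint.comp_sub_right y
    have hpt : ∀ z ∈ B \ A, f z ≤ (2 ^ (N:ℝ) * (1 + R) ^ (-(N:ℝ))) * h (z - y) := by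
      intro z hz
      obtain ⟨hzB, hzA⟩ := hz
      rw [hB_def, mem_closedBall_zero_iff] at hzB
      have hzA' : R / 2 < ‖z‖ := by
        by_contra hcon
        push_neg at hcon
        exact hzA (by rw [hA_def, mem_closedBall_zero_iff]; exact hcon)
      have h2 : (1 + ‖z‖) ^ (-(N:ℝ)) ≤ 2 ^ (N:ℝ) * (1 + R) ^ (-(N:ℝ)) := by
        have hb : (1 + R) / 2 ≤ 1 + ‖z‖ := by linarith
        calc (1 + ‖z‖) ^ (-(N:ℝ)) ≤ ((1 + R) / 2) ^ (-(N:ℝ)) :=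
              Real.rpow_le_rpow_of_nonpos (by linarith) hb (neg_nonpos.2 (Nat.cast_nonneg N))
          _ = 2 ^ (N:ℝ) * (1 + R) ^ (-(N:ℝ)) := by
              rw [Real.div_rpow h1R.le (by norm_num : (0:ℝ) ≤ 2), Real.rpow_neg h1R.le,
                Real.rpow_neg (by norm_num : (0:ℝ) ≤ 2), div_eq_mul_inv, inv_inv]
              ring
      have h3 : h (z - y) = (1 + ‖z - y‖) ^ (-a) := by
        rw [hh_def]
        apply indicator_of_mem
        rw [mem_closedBall_zero_iff]
        calc ‖z - y‖ ≤ ‖z‖ + ‖y‖ := norm_sub_le _ _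
          _ ≤ 3 * R := by linarith
      calc f z = (1 + ‖y - z‖) ^ (-a) * (1 + ‖z‖) ^ (-(N:ℝ)) := by rw [hf_def]
        _ ≤ (1 + ‖y - z‖) ^ (-a) * (2 ^ (N:ℝ) * (1 + R) ^ (-(N:ℝ))) :=
            mul_le_mul_of_nonneg_left h2 (Real.rpow_nonneg (by positivity) _)
        _ = (2 ^ (N:ℝ) * (1 + R) ^ (-(N:ℝ))) * h (z - y) := by
            rw [h3, norm_sub_rev z y]
            ring
    have hBA_meas : MeasurableSet (B \ A) :=
      (measurableSet_closedBall : MeasurableSet B).diff measurableSet_closedBall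
    have hJ : (∫ z in B \ A, h (z - y)) ≤ K * (3 ^ (2*s) * (1 + R) ^ (2*s) / (2*s)) := by
      calc (∫ z in B \ A, h (z - y)) ≤ ∫ z, h (z - y) :=
            setIntegral_le_integral hcomp_int (Filter.Eventually.of_forall fun z => hh_nonneg _)
        _ = ∫ u, h u := integral_sub_right_eq_self h y
        _ = ∫ u in closedBall (0 : EuclideanSpace ℝ (Fin N)) (3*R), (1 + ‖u‖) ^ (-a) := by
            rw [hh_def, integral_indicator measurableSet_closedBall]
        _ ≤ K * ∫ x in (1:ℝ)..(1+3*R), x ^ ((N:ℝ) - 1 - a) := ball_E10 N hN a (3*R) (by linarith)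
        _ ≤ K * (3 ^ (2*s) * (1 + R) ^ (2*s) / (2*s)) := by
            apply mul_le_mul_of_nonneg_left _ hK
            have heval : (∫ x in (1:ℝ)..(1+3*R), x ^ ((N:ℝ) - 1 - a)) =
                ((1+3*R) ^ (2*s) - 1) / (2*s) := by
              rw [integral_rpow (Or.inl (by rw [ha_def]; linarith))]
              rw [show (N:ℝ) - 1 - a + 1 = 2*s by rw [ha_def]; ring]
              rw [Real.one_rpow]
            rw [heval]
            have h13 : ((1:ℝ)+3*R) ^ (2*s) ≤ 3 ^ (2*s) * (1 + R) ^ (2*s) := by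
              rw [← Real.mul_rpow (by norm_num) h1R.le]
              apply Real.rpow_le_rpow (by linarith) (by linarith) (by linarith)
            have h3s : (0:ℝ) < 2*s := by linarith
            rw [div_le_div_iff₀ h3s h3s]
            nlinarith [Real.rpow_nonneg (show (0:ℝ) ≤ 1+3*R by linarith) (2*s)]
    calc (∫ z in B \ A, f z)
        ≤ ∫ z in B \ A, (2 ^ (N:ℝ) * (1 + R) ^ (-(N:ℝ))) * h (z - y) :=
          setIntegral_mono_on hf_int.integrableOn
            ((hcomp_int.const_mul _).integrableOn) hBA_meas hpt
      _ = (2 ^ (N:ℝ) * (1 + R) ^ (-(N:ℝ))) * ∫ z in B \ A, h (z - y) := integral_const_mul _ _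
      _ ≤ (2 ^ (N:ℝ) * (1 + R) ^ (-(N:ℝ))) * (K * (3 ^ (2*s) * (1 + R) ^ (2*s) / (2*s))) := by
          apply mul_le_mul_of_nonneg_left hJ (by positivity)
      _ = c₂ * (1 + R) ^ (-a) := by
          rw [hc₂_def]
          have hcomb : (1 + R) ^ (-(N:ℝ)) * (1 + R) ^ (2*s) = (1 + R) ^ (-a) := by
            rw [← Real.rpow_add h1R]
            congr 1
            rw [ha_def]; ring
          calc 2 ^ (N:ℝ) * (1 + R) ^ (-(N:ℝ)) * (K * (3 ^ (2*s) * (1 + R) ^ (2*s) / (2*s)))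
              = 2 ^ (N:ℝ) * K * (3 ^ (2*s) / (2*s)) *
                  ((1 + R) ^ (-(N:ℝ)) * (1 + R) ^ (2*s)) := by ring
            _ = 2 ^ (N:ℝ) * K * (3 ^ (2*s) / (2*s)) * (1 + R) ^ (-a) := by rw [hcomb]
  -- region Bᶜ
  have hT3 : (∫ z in Bᶜ, f z) ≤ c₃ * (1 + R) ^ (-a) := by
    have hpt : ∀ z ∈ Bᶜ, f z ≤ 2 ^ a * (1 + ‖z‖) ^ (-((N:ℝ) + a)) := by
      intro z hz
      have hz' : 2 * R < ‖z‖ := by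
        by_contra hcon
        push_neg at hcon
        exact hz (by rw [hB_def, mem_closedBall_zero_iff]; exact hcon)
      have hz0 : (0:ℝ) < 1 + ‖z‖ := by positivity
      have h1 : ‖z‖ - R ≤ ‖y - z‖ := by
        have := norm_sub_norm_le z y
        rw [norm_sub_rev] at this
        linarith
      have hb : (1 + ‖z‖) / 2 ≤ 1 + ‖y - z‖ := by linarith
      have h2 : (1 + ‖y - z‖) ^ (-a) ≤ 2 ^ a * (1 + ‖z‖) ^ (-a) := by
        calc (1 + ‖y - z‖) ^ (-a) ≤ ((1 + ‖z‖) / 2) ^ (-a) :=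
              Real.rpow_le_rpow_of_nonpos (by linarith) hb (by linarith)
          _ = 2 ^ a * (1 + ‖z‖) ^ (-a) := by
              rw [Real.div_rpow hz0.le (by norm_num : (0:ℝ) ≤ 2), Real.rpow_neg hz0.le,
                Real.rpow_neg (by norm_num : (0:ℝ) ≤ 2), div_eq_mul_inv, inv_inv]
              ring
      calc f z = (1 + ‖y - z‖) ^ (-a) * (1 + ‖z‖) ^ (-(N:ℝ)) := by rw [hf_def]
        _ ≤ (2 ^ a * (1 + ‖z‖) ^ (-a)) * (1 + ‖z‖) ^ (-(N:ℝ)) :=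
            mul_le_mul_of_nonneg_right h2 (Real.rpow_nonneg hz0.le _)
        _ = 2 ^ a * (1 + ‖z‖) ^ (-((N:ℝ) + a)) := by
            rw [mul_assoc, ← Real.rpow_add hz0]
            ring_nf
    have hcompl : (∫ z in Bᶜ, (1 + ‖z‖) ^ (-((N:ℝ) + a))) ≤
        K * ((2*R) ^ (-a) / a) := by
      have h := compl_E10 N hN ((N:ℝ) + a) (by linarith) (2*R) (by linarith)
      rw [show (N:ℝ) - ((N:ℝ) + a) = -a by ring, show (N:ℝ) + a - (N:ℝ) = a by ring] at h
      exact h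
    calc (∫ z in Bᶜ, f z)
        ≤ ∫ z in Bᶜ, 2 ^ a * (1 + ‖z‖) ^ (-((N:ℝ) + a)) :=
          setIntegral_mono_on hf_int.integrableOn
            ((hNa_int.const_mul _).integrableOn)
            (measurableSet_closedBall : MeasurableSet B).compl hpt
      _ = 2 ^ a * ∫ z in Bᶜ, (1 + ‖z‖) ^ (-((N:ℝ) + a)) := integral_const_mul _ _
      _ ≤ 2 ^ a * (K * ((2*R) ^ (-a) / a)) := by
          apply mul_le_mul_of_nonneg_left hcompl (by positivity)
      _ ≤ c₃ * (1 + R) ^ (-a) := by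
          rw [hc₃_def]
          have h2R : (2*R) ^ (-a) ≤ (1 + R) ^ (-a) :=
            Real.rpow_le_rpow_of_nonpos h1R (by linarith) (by linarith)
          have h2a : (0:ℝ) ≤ 2 ^ a := by positivity
          rw [div_mul_eq_mul_div, div_eq_mul_inv, div_eq_mul_inv]
          calc 2 ^ a * (K * ((2*R) ^ (-a) * a⁻¹))
              ≤ 2 ^ a * (K * ((1 + R) ^ (-a) * a⁻¹)) := by
                apply mul_le_mul_of_nonneg_left _ h2a
                apply mul_le_mul_of_nonneg_left _ hK
                apply mul_le_mul_of_nonneg_right h2R (by positivity)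
            _ = 2 ^ a * K * (1 + R) ^ (-a) * a⁻¹ := by ring
  -- assembly
  rw [hsplit]
  have hstep2 : c₂ * (1 + R) ^ (-a) ≤ (c₂ / Real.log 2) * Real.log R * (1 + R) ^ (-a) := by
    apply mul_le_mul_of_nonneg_right _ hpowR.le
    rw [div_mul_eq_mul_div, le_div_iff₀ hlog2]
    nlinarith
  have hstep3 : c₃ * (1 + R) ^ (-a) ≤ (c₃ / Real.log 2) * Real.log R * (1 + R) ^ (-a) := by
    apply mul_le_mul_of_nonneg_right _ hpowR.le
    rw [div_mul_eq_mul_div, le_div_iff₀ hlog2]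
    nlinarith
  have hfinal : c₁ * Real.log R * (1 + R) ^ (-a) + (c₂ / Real.log 2) * Real.log R * (1 + R) ^ (-a)
      + (c₃ / Real.log 2) * Real.log R * (1 + R) ^ (-a) ≤
      (c₁ + c₂ / Real.log 2 + c₃ / Real.log 2 + 1) * Real.log R * (1 + R) ^ (-a) := by
    nlinarith [mul_pos hlogR hpowR]
  linarith [hT1, hT2.trans hstep2, hT3.trans hstep3, hfinal]
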